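/- For every ε with 0 < ε < 1/2 there is a constant C(ε) ≤ (1+ε)²/(4ε²(1−ε)) such that every ⌈εn⌉-connected graph G on n vertices satisfies md(G) ≤ C(ε). In particular, if Γ is an extremal MD-coloring of a k-connected graph G with k = εn, then for each color i, the number of unordered vertex pairs separated by color i is at least k(n−k). -/

import Mathlib

open SimpleGraph

variable {V : Type*}

/-- Color `i` separates `u` and `v`: there is an edge-cut, all of whose edges
have color `i`, whose removal disconnects `u` from `v`. -/
def separatesColor (G : SimpleGraph V) (Γ : Sym2 V → ℕ) (i : ℕ) (u v : V) : Prop :=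
  ∃ F : Set (Sym2 V), F ⊆ G.edgeSet ∧ (∀ e ∈ F, Γ e = i) ∧
    ¬ ((G.deleteEdges F).Reachable u v)

/-- An MD-coloring: every pair of distinct vertices is separated by a
monochromatic edge-cut. -/
def IsMDColoring (G : SimpleGraph V) (Γ : Sym2 V → ℕ) : Prop :=
  ∀ u v : V, u ≠ v → ∃ i, separatesColor G Γ i u v

/-- The monochromatic disconnection number: the maximum number of colors
used by an MD-coloring. -/
noncomputable def mdNumber (G : SimpleGraph V) : ℕ :=
  sSup {k | ∃ Γ : Sym2 V → ℕ, IsMDColoring G Γ ∧ (Γ '' G.edgeSet).ncard = k}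

section MDProofAux
namespace MDAux
variable {V : Type*} (G : SimpleGraph V) (Γ : Sym2 V → ℕ) (i : ℕ)

/-- The set of edges of color `i`. -/
def Ei : Set (Sym2 V) := {e | e ∈ G.edgeSet ∧ Γ e = i}

/-- The graph with color-`i` edges deleted. -/
def Gi : SimpleGraph V := G.deleteEdges (Ei G Γ i)

variable {G Γ i}

lemma mem_Ei {e : Sym2 V} : e ∈ Ei G Γ i ↔ e ∈ G.edgeSet ∧ Γ e = i := Iff.rfl

lemma sep_iff {u v : V} : separatesColor G Γ i u v ↔ ¬ (Gi G Γ i).Reachable u v := by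
  constructor
  · rintro ⟨F, hF, hcol, hn⟩ hR
    exact hn (hR.mono (G.deleteEdges_anti (fun e he => mem_Ei.2 ⟨hF he, hcol e he⟩)))
  · intro hn
    exact ⟨Ei G Γ i, fun e he => he.1, fun e he => he.2, hn⟩

lemma adj_of_not_colored {u v : V} (h : G.Adj u v) (hc : Γ s(u, v) ≠ i) :
    (Gi G Γ i).Adj u v := by
  rw [Gi, deleteEdges_adj]
  exact ⟨h, fun he => hc he.2⟩

lemma not_reach_endpoints (hMD : IsMDColoring G Γ) {u v : V} (h : G.Adj u v)
    (hc : Γ s(u, v) = i) : ¬ (Gi G Γ i).Reachable u v := by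
  obtain ⟨j, F, hF, hcol, hn⟩ := hMD u v h.ne
  by_cases hmem : s(u, v) ∈ F
  · have hji : j = i := by rw [← hcol _ hmem, hc]
    subst hji
    intro hR
    exact hn (hR.mono (G.deleteEdges_anti (fun e he => mem_Ei.2 ⟨hF he, hcol e he⟩)))
  · exact absurd (Adj.reachable (by rw [deleteEdges_adj]; exact ⟨h, hmem⟩)) hn

/-- Key lemma: if `b` has two `i`-colored edges into the same component of `Gi`,
the MD property fails for that pair. -/
lemma key3 (hMD : IsMDColoring G Γ) {b u v : V} (hne : u ≠ v)
    (hR : (Gi G Γ i).Reachable u v) (hbu : G.Adj b u) (hbv : G.Adj b v)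
    (hcu : Γ s(b, u) = i) (hcv : Γ s(b, v) = i) : False := by
  obtain ⟨j, F, hF, hcol, hn⟩ := hMD u v hne
  by_cases hj : j = i
  · subst hj
    exact hn (hR.mono (G.deleteEdges_anti (fun e he => mem_Ei.2 ⟨hF he, hcol e he⟩)))
  · have h1 : s(b, u) ∉ F := fun h => hj ((hcol _ h).symm.trans hcu)
    have h2 : s(b, v) ∉ F := fun h => hj ((hcol _ h).symm.trans hcv)
    have a1 : (G.deleteEdges F).Adj u b := by rw [deleteEdges_adj]; exact ⟨hbu.symm, by rwa [Sym2.eq_swap]⟩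
    have a2 : (G.deleteEdges F).Adj b v := by rw [deleteEdges_adj]; exact ⟨hbv, h2⟩
    exact hn (a1.reachable.trans a2.reachable)




lemma exists_adj_of_reachable {W : Type*} {H : SimpleGraph W} {a b : W}
    (h : H.Reachable a b) (hne : a ≠ b) : ∃ c, H.Adj a c := by
  obtain ⟨p⟩ := h
  cases p with
  | nil => exact absurd rfl hne
  | cons h _ => exact ⟨_, h⟩

/-- The inclusion homomorphism from an induced subgraph. -/
def inducedHom {W : Type*} (H : SimpleGraph W) (s : Set W) : H.induce s →g H where
  toFun := Subtype.val
  map_rel' := fun h => by simpa using h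

open scoped Classical in
lemma mindeg {n k : ℕ} {G : SimpleGraph (Fin n)}
    (hconn : ∀ S : Set (Fin n), S.ncard < k → (G.induce Sᶜ).Connected)
    (hkn : k < n) (v : Fin n) : k ≤ G.degree v := by
  classical
  by_contra hlt
  push_neg at hlt
  set S : Set (Fin n) := G.neighborSet v with hS
  have hcard : S.ncard = G.degree v := by
    rw [hS, Set.ncard_eq_toFinset_card']; rfl
  have hc := hconn S (by omega)
  have hvS : v ∈ Sᶜ := by simp [hS]
  have hcompl : S.ncard + (Sᶜ).ncard = n := by
    rw [Set.ncard_add_ncard_compl, Nat.card_eq_fintype_card, Fintype.card_fin]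
  have h2 : 1 < (Sᶜ).ncard := by omega
  obtain ⟨w, hwS, hwv⟩ := Set.exists_ne_of_one_lt_ncard h2 v
  have hne : (⟨v, hvS⟩ : ↥(Sᶜ : Set (Fin n))) ≠ ⟨w, hwS⟩ :=
    fun h => hwv (Subtype.mk_eq_mk.mp h).symm
  obtain ⟨c, hadj⟩ := exists_adj_of_reachable (hc.preconnected ⟨v, hvS⟩ ⟨w, hwS⟩) hne
  have hGadj : G.Adj v c.val := by simpa using hadj
  exact c.2 hGadj

lemma ivt {W : Type*} {G : SimpleGraph W} (hG : G.Connected) (u : W) {a b : W}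
    (p : G.Walk a b) (m : ℕ) :  G.dist u a ≤ m → m ≤ G.dist u b →
    ∃ x ∈ p.support, G.dist u x = m := by
  induction p with
  | nil => exact fun ha hb => ⟨_, by simp, le_antisymm ha hb⟩
  | @cons a c b h p ih =>
    intro ha hb
    by_cases hm : G.dist u a = m
    · exact ⟨a, by simp, hm⟩
    · have h1 : G.dist u a < m := lt_of_le_of_ne ha hm
      have h2 : G.dist u c ≤ G.dist u a + 1 := by
        have := hG.dist_triangle (u := u) (v := a) (w := c)
        have hac : G.dist a c ≤ 1 := le_of_eq (dist_eq_one_iff_adj.2 h)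
        omega
      obtain ⟨x, hx, hxm⟩ := ih (by omega) hb
      exact ⟨x, by simp [hx], hxm⟩

lemma sphere_card {n k : ℕ} {G : SimpleGraph (Fin n)}
    (hconn : ∀ S : Set (Fin n), S.ncard < k → (G.induce Sᶜ).Connected)
    (hG : G.Connected) (u w : Fin n) {m : ℕ} (hm : 1 ≤ m) (hmd : m < G.dist u w) :
    k ≤ (Finset.univ.filter (fun v => G.dist u v = m)).card := by
  classical
  by_contra hlt
  push_neg at hlt
  set S : Set (Fin n) := {v | G.dist u v = m} with hS
  have hcard : S.ncard = (Finset.univ.filter (fun v => G.dist u v = m)).card := by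
    rw [hS, Set.ncard_eq_toFinset_card']
    congr 1
    ext x
    simp
  have hc := hconn S (by omega)
  have huS : u ∈ Sᶜ := by simp [hS, SimpleGraph.dist_self]; omega
  have hwS : w ∈ Sᶜ := by simp [hS]; omega
  obtain ⟨q⟩ := hc.preconnected ⟨u, huS⟩ ⟨w, hwS⟩
  have hsupp : ∀ x ∈ (q.map (inducedHom G Sᶜ)).support, x ∈ Sᶜ := by
    intro x hx
    rw [Walk.support_map] at hx
    obtain ⟨y, _, rfl⟩ := List.mem_map.mp hx
    exact y.2
  obtain ⟨x, hx, hxm⟩ := ivt hG u (q.map (inducedHom G Sᶜ)) m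
    (show G.dist u u ≤ m by rw [SimpleGraph.dist_self]; omega) (le_of_lt hmd)
  exact (hsupp x hx) hxm



open Finset in
open scoped Classical in
lemma colorCount {n k : ℕ} {G : SimpleGraph (Fin n)} {Γ : Sym2 (Fin n) → ℕ} {i : ℕ}
    (hconn : ∀ S : Set (Fin n), S.ncard < k → (G.induce Sᶜ).Connected)
    (hMD : IsMDColoring G Γ) (hk : 1 ≤ k) (hkn : k < n) (hnk : 2 * k ≤ n + 1)
    {u₀ v₀ : Fin n} (hadj : G.Adj u₀ v₀) (hcol : Γ s(u₀, v₀) = i) :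
    2 * (k * (n - k)) ≤
      ∑ x : Fin n, (n - (univ.filter (fun y => (Gi G Γ i).Reachable x y)).card) := by
  classical
  set R := (Gi G Γ i).Reachable with hR
  set c : Fin n → ℕ := fun x => (univ.filter (fun y => R x y)).card with hc
  have hdeg : ∀ v, k ≤ G.degree v := mindeg hconn hkn
  have hn0 : ¬ R u₀ v₀ := not_reach_endpoints hMD hadj hcol
  have hcle : ∀ x, c x ≤ n := fun x => by
    simpa using (Finset.card_filter_le univ (fun y => R x y))
  obtain ⟨x₀, -, hx₀⟩ := Finset.exists_max_image univ c ⟨u₀, mem_univ _⟩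
  have hcR : ∀ x y, R x y → c x = c y := by
    intro x y hxy
    apply congrArg Finset.card
    ext z
    simp only [mem_filter, mem_univ, true_and]
    exact ⟨fun h => hxy.symm.trans h, fun h => hxy.trans h⟩
  rcases lt_or_ge (c x₀) k with hM | hMk
  · -- all components small
    have hstep : ∀ x ∈ univ, n - (k - 1) ≤ n - c x := fun x _ => by
      have := hx₀ x (mem_univ x); omega
    have hsum := Finset.card_nsmul_le_sum univ
      (fun x => n - c x) (n - (k - 1)) hstep
    rw [smul_eq_mul, Finset.card_univ, Fintype.card_fin] at hsum
    refine le_trans ?_ hsum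
    set a := n - k with hadef
    have h1 : n = k + a := by omega
    have h2 : k ≤ a + 1 := by omega
    have h3 : n - (k - 1) = a + 1 := by omega
    rw [h3, h1]
    calc 2 * (k * a) = k * a + k * a := by ring
      _ ≤ k * a + (a + 1) * a := by
          exact Nat.add_le_add_left (Nat.mul_le_mul_right a h2) _
      _ ≤ (k + a) * (a + 1) := by nlinarith
  · rcases le_or_gt (c x₀) (n - k) with hMnk | hbig
    · -- middle case
      set M := c x₀ with hM
      have hsplit := Finset.sum_filter_add_sum_filter_not univ
        (fun x => R x₀ x) (fun x => n - c x)
      have hcard1 : (univ.filter (fun x => R x₀ x)).card = M := rfl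
      have hcard2 : (univ.filter (fun x => ¬ R x₀ x)).card = n - M := by
        have htmp : (univ.filter (fun x => R x₀ x)).card
            + (univ.filter (fun x => ¬ R x₀ x)).card = n := by
          simpa using Finset.card_filter_add_card_filter_not
            (s := univ) (p := fun x => R x₀ x)
        omega
      have hs1 : ∑ x ∈ univ.filter (fun x => R x₀ x), (n - c x) = M * (n - M) := by
        rw [Finset.sum_congr rfl (fun x hx => ?_), Finset.sum_const, hcard1, smul_eq_mul]
        have hx := (Finset.mem_filter.mp hx).2
        rw [← hcR x₀ x hx]
      have hs2 : (n - M) * M ≤ ∑ x ∈ univ.filter (fun x => ¬ R x₀ x), (n - c x) := by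
        have hstep : ∀ x ∈ univ.filter (fun x => ¬ R x₀ x), M ≤ n - c x := by
          intro x hx
          have hx' := (Finset.mem_filter.mp hx).2
          have hsub : (univ.filter (fun y => R x y)) ⊆ (univ.filter (fun y => ¬ R x₀ y)) := by
            intro z hz
            simp only [mem_filter, mem_univ, true_and] at hz ⊢
            exact fun hz0 => hx' (hz0.trans hz.symm)
          have hcx : c x ≤ n - M := by
            have := Finset.card_le_card hsub
            rw [hcard2] at this
            exact this
          have := hcle x₀
          omega
        have := Finset.card_nsmul_le_sum _ _ _ hstep
        rw [smul_eq_mul, hcard2] at this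
        exact this
      have htot : 2 * (M * (n - M)) ≤ ∑ x : Fin n, (n - c x) := by
        rw [← hsplit, ← hs1]
        have : 2 * (M * (n - M)) = M * (n - M) + (n - M) * M := by ring
        omega
      refine le_trans ?_ htot
      -- k(n-k) ≤ M(n-M) given k ≤ M ≤ n-k
      have hb : k ≤ n - M := by omega
      have ha : n - k = (n - M) + (M - k) := by omega
      have : k * (n - k) ≤ M * (n - M) := by
        rw [ha]
        calc k * ((n - M) + (M - k)) = k * (n - M) + k * (M - k) := by ring
          _ ≤ k * (n - M) + (n - M) * (M - k) := by
              exact Nat.add_le_add_left (Nat.mul_le_mul_right _ hb) _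
          _ ≤ M * (n - M) := by nlinarith [Nat.sub_add_cancel hMk]
      omega
    · -- big component: contradiction
      exfalso
      set C := univ.filter (fun x => R x₀ x) with hC
      have hCcard : C.card = c x₀ := rfl
      have hbex : ∃ b, ¬ R x₀ b := by
        by_cases h : R x₀ u₀
        · exact ⟨v₀, fun h2 => hn0 (h.symm.trans h2)⟩
        · exact ⟨u₀, h⟩
      obtain ⟨b, hb⟩ := hbex
      have hbC : b ∉ C := by simp [hC, hb]
      have h1 : G.neighborFinset b \ C ⊆ (univ \ C).erase b := by
        intro x hx
        rw [Finset.mem_sdiff, mem_neighborFinset] at hx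
        rw [Finset.mem_erase, Finset.mem_sdiff]
        exact ⟨hx.1.ne', ⟨mem_univ _, hx.2⟩⟩
      have h2 : ((univ \ C).erase b).card = n - c x₀ - 1 := by
        rw [Finset.card_erase_of_mem (by simp [hbC]), Finset.card_sdiff_of_subset (subset_univ C),
          Finset.card_univ, Fintype.card_fin, hCcard]
      have h3 : (G.neighborFinset b \ C).card ≤ n - c x₀ - 1 :=
        h2 ▸ Finset.card_le_card h1
      have h4 : k ≤ (G.neighborFinset b).card := hdeg b
      have h5 : (G.neighborFinset b \ C).card + (G.neighborFinset b ∩ C).card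
          = (G.neighborFinset b).card := Finset.card_sdiff_add_card_inter _ _
      have hbn : c x₀ ≤ n - 1 := by
        have hss : univ.filter (fun y => R x₀ y) ⊆ univ.erase b := by
          intro z hz
          rw [Finset.mem_erase]
          exact ⟨fun h => hb (h ▸ (Finset.mem_filter.mp hz).2), mem_univ _⟩
        have := Finset.card_le_card hss
        rw [Finset.card_erase_of_mem (mem_univ b), Finset.card_univ, Fintype.card_fin] at this
        exact this
      have h6 : 1 < (G.neighborFinset b ∩ C).card := by
        have := hcle x₀
        omega
      obtain ⟨u, hu, v, hv, huv⟩ := Finset.one_lt_card.mp h6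
      rw [Finset.mem_inter, mem_neighborFinset] at hu hv
      have hRu : R x₀ u := (Finset.mem_filter.mp hu.2).2
      have hRv : R x₀ v := (Finset.mem_filter.mp hv.2).2
      have hcu : Γ s(b, u) = i := by
        by_contra h
        exact hb (hRu.trans (adj_of_not_colored hu.1 h).reachable.symm)
      have hcv : Γ s(b, v) = i := by
        by_contra h
        exact hb (hRv.trans (adj_of_not_colored hv.1 h).reachable.symm)
      exact key3 hMD huv (hRu.symm.trans hRv) hu.1 hv.1 hcu hcv

end MDAux

section TestC
open SimpleGraph MDAux Finset

open scoped Classical in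
lemma pairs_card {n k : ℕ} {G : SimpleGraph (Fin n)} {Γ : Sym2 (Fin n) → ℕ} {i : ℕ}
    (hconn : ∀ S : Set (Fin n), S.ncard < k → (G.induce Sᶜ).Connected)
    (hMD : IsMDColoring G Γ) (hk : 1 ≤ k) (hkn : k < n) (hnk : 2 * k ≤ n + 1)
    {u₀ v₀ : Fin n} (hadj : G.Adj u₀ v₀) (hcol : Γ s(u₀, v₀) = i) :
    k * (n - k) ≤
      {p : Sym2 (Fin n) | ¬ p.IsDiag ∧
        ∀ u v : Fin n, p = s(u, v) → separatesColor G Γ i u v}.ncard := by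
  classical
  set H : SimpleGraph (Fin n) :=
    { Adj := fun u v => ¬ (Gi G Γ i).Reachable u v
      symm := ⟨fun u v h h2 => h h2.symm⟩
      loopless := ⟨fun u h => h (Reachable.refl u)⟩ } with hH
  have hset : {p : Sym2 (Fin n) | ¬ p.IsDiag ∧
      ∀ u v : Fin n, p = s(u, v) → separatesColor G Γ i u v} = H.edgeSet := by
    ext p
    induction p using Sym2.ind with
    | _ u v =>
      rw [Set.mem_setOf_eq, mem_edgeSet]
      constructor
      · rintro ⟨hd, hsep⟩
        exact sep_iff.mp (hsep u v rfl)
      · intro hA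
        refine ⟨fun hdiag => hA ((Sym2.mk_isDiag_iff.mp hdiag) ▸ Reachable.refl u), ?_⟩
        intro a b hab
        rw [sep_iff]
        rcases Sym2.eq_iff.mp hab with ⟨h1, h2⟩ | ⟨h1, h2⟩
        · subst h1; subst h2; exact hA
        · subst h1; subst h2; exact fun h => hA h.symm
  rw [hset, ← SimpleGraph.coe_edgeFinset, Set.ncard_coe_finset]
  have hdegsum := SimpleGraph.sum_degrees_eq_twice_card_edges H
  have hdeg : ∀ x, H.degree x =
      n - (univ.filter (fun y => (Gi G Γ i).Reachable x y)).card := by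
    intro x
    have h1 : H.degree x = (univ.filter (fun y => H.Adj x y)).card := by
      rw [SimpleGraph.degree, neighborFinset_eq_filter]
    have h2 : (univ.filter (fun y => (Gi G Γ i).Reachable x y)).card
        + (univ.filter (fun y => ¬ (Gi G Γ i).Reachable x y)).card = n := by
      simpa using Finset.card_filter_add_card_filter_not
        (s := univ) (p := fun y => (Gi G Γ i).Reachable x y)
    have h3 : (univ.filter (fun y => H.Adj x y)) =
        (univ.filter (fun y => ¬ (Gi G Γ i).Reachable x y)) := rfl
    rw [h1, h3]
    omega
  have hcc := colorCount hconn hMD hk hkn hnk hadj hcol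
  have : ∑ x, H.degree x =
      ∑ x : Fin n, (n - (univ.filter (fun y => (Gi G Γ i).Reachable x y)).card) :=
    Finset.sum_congr rfl (fun x _ => hdeg x)
  omega

end TestC

section TestD
open SimpleGraph MDAux Finset

open scoped Classical in
lemma distSum {n k : ℕ} {G : SimpleGraph (Fin n)}
    (hconn : ∀ S : Set (Fin n), S.ncard < k → (G.induce Sᶜ).Connected)
    (hG : G.Connected) (hk : 1 ≤ k) (hn : 1 ≤ n) (u : Fin n) :
    ((∑ v : Fin n, G.dist u v : ℕ) : ℝ) ≤ (2 * ((n : ℝ) - 1) + k) ^ 2 / (8 * k) := by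
  classical
  haveI : Nonempty (Fin n) := ⟨⟨0, hn⟩⟩
  have hne : (univ.image (G.dist u)).Nonempty :=
    (Finset.univ_nonempty (α := Fin n)).image _
  set D := (univ.image (G.dist u)).max' hne with hD
  have hDle : ∀ v, G.dist u v ≤ D := fun v =>
    Finset.le_max' _ _ (mem_image_of_mem _ (mem_univ v))
  obtain ⟨w, -, hw⟩ := Finset.mem_image.mp ((univ.image (G.dist u)).max'_mem hne)
  -- rewrite the sum as a sum over levels
  have hswap : ∑ v : Fin n, G.dist u v
      = ∑ j ∈ Icc 1 D, (univ.filter (fun v => j ≤ G.dist u v)).card := by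
    have h1 : ∀ v : Fin n, G.dist u v = ∑ j ∈ Icc 1 D, (if j ≤ G.dist u v then 1 else 0) := by
      intro v
      have : (Icc 1 D).filter (fun j => j ≤ G.dist u v) = Icc 1 (G.dist u v) := by
        ext j
        simp only [mem_filter, mem_Icc]
        have := hDle v
        omega
      calc G.dist u v = (Icc 1 (G.dist u v)).card := by rw [Nat.card_Icc]; omega
        _ = ((Icc 1 D).filter (fun j => j ≤ G.dist u v)).card := by rw [this]
        _ = ∑ j ∈ Icc 1 D, (if j ≤ G.dist u v then 1 else 0) := Finset.card_filter _ _
    rw [Finset.sum_congr rfl (fun v _ => h1 v), Finset.sum_comm]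
    exact Finset.sum_congr rfl (fun j _ => (Finset.card_filter _ _).symm)
  -- bound each level
  have hlevel : ∀ j ∈ Icc 1 D,
      (((univ.filter (fun v => j ≤ G.dist u v)).card : ℕ) : ℝ)
        ≤ (n : ℝ) - 1 - k * ((j : ℝ) - 1) := by
    intro j hj
    rw [mem_Icc] at hj
    -- the complement contains u and all spheres 1..j-1
    set B : Finset (Fin n) := {u} ∪ (Icc 1 (j - 1)).biUnion
      (fun m => univ.filter (fun v => G.dist u v = m)) with hB
    have hdisj : ∀ (m₁ : ℕ), m₁ ∈ Icc 1 (j-1) → ∀ (m₂ : ℕ), m₂ ∈ Icc 1 (j-1) → m₁ ≠ m₂ →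
        Disjoint (univ.filter (fun v => G.dist u v = m₁))
          (univ.filter (fun v => G.dist u v = m₂)) := by
      intro m₁ _ m₂ _ hne12
      rw [Finset.disjoint_left]
      intro a ha1 ha2
      rw [mem_filter] at ha1 ha2
      omega
    have hcardB : 1 + (j - 1) * k ≤ B.card := by
      have hu_not : u ∉ (Icc 1 (j - 1)).biUnion
          (fun m => univ.filter (fun v => G.dist u v = m)) := by
        rw [Finset.mem_biUnion]
        rintro ⟨m, hm, hmem⟩
        rw [mem_Icc] at hm
        rw [mem_filter, SimpleGraph.dist_self] at hmem
        omega
      rw [hB, Finset.card_union_of_disjoint (by simpa using hu_not), Finset.card_singleton,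
        Finset.card_biUnion hdisj]
      have hsph : ∀ m ∈ Icc 1 (j - 1),
          k ≤ (univ.filter (fun v => G.dist u v = m)).card := by
        intro m hm
        rw [mem_Icc] at hm
        exact sphere_card hconn hG u w hm.1 (by omega)
      have := Finset.card_nsmul_le_sum (Icc 1 (j-1))
        (fun m => (univ.filter (fun v => G.dist u v = m)).card) k hsph
      rw [smul_eq_mul, Nat.card_Icc] at this
      have hred : j - 1 + 1 - 1 = j - 1 := by omega
      rw [hred] at this
      omega
    have hBsub : B ⊆ univ.filter (fun v => ¬ j ≤ G.dist u v) := by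
      intro x hx
      rw [hB, Finset.mem_union, Finset.mem_biUnion] at hx
      rw [mem_filter]
      refine ⟨mem_univ _, ?_⟩
      rcases hx with hx | ⟨m, hm, hx⟩
      · rw [Finset.mem_singleton] at hx
        subst hx
        rw [SimpleGraph.dist_self]
        omega
      · rw [mem_Icc] at hm
        rw [mem_filter] at hx
        omega
    have hsplit : (univ.filter (fun v => j ≤ G.dist u v)).card
        + (univ.filter (fun v => ¬ j ≤ G.dist u v)).card = n := by
      simpa using Finset.card_filter_add_card_filter_not
        (s := univ) (p := fun v => j ≤ G.dist u v)
    have hcard2 := le_trans hcardB (Finset.card_le_card hBsub)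
    have hfin : (univ.filter (fun v => j ≤ G.dist u v)).card + (1 + (j-1)*k) ≤ n := by omega
    have hj1 : (1 : ℝ) ≤ (j : ℝ) := by exact_mod_cast hj.1
    have : ((univ.filter (fun v => j ≤ G.dist u v)).card : ℝ) + (1 + ((j:ℝ)-1) * k) ≤ n := by
      have hcast : (((j : ℕ) - 1 : ℕ) : ℝ) = (j : ℝ) - 1 := by
        have := hj.1; push_cast [Nat.cast_sub this]; ring
      calc ((univ.filter (fun v => j ≤ G.dist u v)).card : ℝ) + (1 + ((j:ℝ)-1) * k)
          = (((univ.filter (fun v => j ≤ G.dist u v)).card + (1 + (j-1)*k) : ℕ) : ℝ) := by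
            push_cast [hcast]; ring
        _ ≤ n := by exact_mod_cast hfin
    linarith
  -- sum the bounds
  have hsum : ((∑ v : Fin n, G.dist u v : ℕ) : ℝ)
      ≤ ∑ j ∈ Icc 1 D, ((n : ℝ) - 1 - k * ((j : ℝ) - 1)) := by
    rw [hswap]
    push_cast
    exact Finset.sum_le_sum hlevel
  have hgauss : ∑ j ∈ Icc 1 D, ((j : ℝ) - 1) = (D : ℝ) * ((D : ℝ) - 1) / 2 := by
    induction D with
    | zero => simp
    | succ d ih =>
      rw [Finset.sum_Icc_succ_top (by omega)]
      rw [ih]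
      push_cast
      ring
  have hsum2 : ∑ j ∈ Icc 1 D, ((n : ℝ) - 1 - k * ((j : ℝ) - 1))
      = (D : ℝ) * ((n : ℝ) - 1) - k * ((D : ℝ) * ((D : ℝ) - 1) / 2) := by
    rw [Finset.sum_sub_distrib, ← Finset.mul_sum, hgauss, Finset.sum_const, Nat.card_Icc,
      Nat.add_sub_cancel, nsmul_eq_mul]
  refine le_trans hsum (le_trans (le_of_eq hsum2) ?_)
  rw [le_div_iff₀ (by positivity : (0:ℝ) < 8 * k)]
  nlinarith [sq_nonneg (2 * (k:ℝ) * D - (2 * ((n:ℝ) - 1) + k))]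

end TestD

section TestE
open SimpleGraph MDAux Finset

open scoped Classical in
lemma totalBound {n k : ℕ} {G : SimpleGraph (Fin n)} {Γ : Sym2 (Fin n) → ℕ}
    (hconn : ∀ S : Set (Fin n), S.ncard < k → (G.induce Sᶜ).Connected)
    (hG : G.Connected) (hMD : IsMDColoring G Γ)
    (hk : 1 ≤ k) (hkn : k < n) (hnk : 2 * k ≤ n + 1) :
    (((Γ '' G.edgeSet).ncard * (2 * (k * (n - k))) : ℕ) : ℝ)
      ≤ (n : ℝ) * ((2 * ((n : ℝ) - 1) + k) ^ 2 / (8 * k)) := by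
  classical
  have hfin : (Γ '' G.edgeSet).Finite := (G.edgeSet.toFinite).image Γ
  set If := hfin.toFinset with hIf
  have hncard : (Γ '' G.edgeSet).ncard = If.card := Set.ncard_eq_toFinset_card _ hfin
  have hA : If.card * (2 * (k * (n - k))) ≤
      ∑ i ∈ If, ∑ x : Fin n,
        (n - (univ.filter (fun y => (Gi G Γ i).Reachable x y)).card) := by
    rw [← smul_eq_mul]
    apply Finset.card_nsmul_le_sum
    intro i hi
    rw [hIf, Set.Finite.mem_toFinset] at hi
    obtain ⟨e, he, rfl⟩ := hi
    revert he
    induction e using Sym2.ind with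
    | _ a b => exact fun he => colorCount hconn hMD hk hkn hnk ((SimpleGraph.mem_edgeSet G).mp he) rfl
  have hcompl : ∀ (i : ℕ) (x : Fin n),
      n - (univ.filter (fun y => (Gi G Γ i).Reachable x y)).card
      = (univ.filter (fun y => ¬ (Gi G Γ i).Reachable x y)).card := by
    intro i x
    have htmp : (univ.filter (fun y => (Gi G Γ i).Reachable x y)).card
        + (univ.filter (fun y => ¬ (Gi G Γ i).Reachable x y)).card = n := by
      simpa using Finset.card_filter_add_card_filter_not
        (s := univ) (p := fun y => (Gi G Γ i).Reachable x y)
    omega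
  have hB : ∑ i ∈ If, ∑ x : Fin n,
        (n - (univ.filter (fun y => (Gi G Γ i).Reachable x y)).card)
      = ∑ x : Fin n, ∑ y : Fin n,
          (If.filter (fun i => ¬ (Gi G Γ i).Reachable x y)).card := by
    calc ∑ i ∈ If, ∑ x : Fin n,
          (n - (univ.filter (fun y => (Gi G Γ i).Reachable x y)).card)
        = ∑ i ∈ If, ∑ x : Fin n, ∑ y : Fin n,
            (if ¬ (Gi G Γ i).Reachable x y then 1 else 0) :=
          Finset.sum_congr rfl fun i _ => Finset.sum_congr rfl fun x _ => by
            rw [hcompl]; exact Finset.card_filter _ _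
      _ = ∑ x : Fin n, ∑ i ∈ If, ∑ y : Fin n,
            (if ¬ (Gi G Γ i).Reachable x y then 1 else 0) := Finset.sum_comm
      _ = ∑ x : Fin n, ∑ y : Fin n, ∑ i ∈ If,
            (if ¬ (Gi G Γ i).Reachable x y then 1 else 0) :=
          Finset.sum_congr rfl fun x _ => Finset.sum_comm
      _ = ∑ x : Fin n, ∑ y : Fin n,
            (If.filter (fun i => ¬ (Gi G Γ i).Reachable x y)).card :=
          Finset.sum_congr rfl fun x _ => Finset.sum_congr rfl fun y _ =>
            (Finset.card_filter _ _).symm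
  have hC : ∀ x y : Fin n,
      (If.filter (fun i => ¬ (Gi G Γ i).Reachable x y)).card ≤ G.dist x y := by
    intro x y
    obtain ⟨p, hp⟩ := hG.exists_walk_length_eq_dist x y
    have hsub : If.filter (fun i => ¬ (Gi G Γ i).Reachable x y)
        ⊆ p.edges.toFinset.image Γ := by
      intro i hi
      rw [mem_filter] at hi
      by_contra hni
      apply hi.2
      have hedges : ∀ e ∈ p.edges, e ∉ Ei G Γ i := by
        intro e hee hmem
        exact hni (Finset.mem_image.mpr ⟨e, List.mem_toFinset.mpr hee, hmem.2⟩)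
      exact ⟨p.toDeleteEdges (Ei G Γ i) hedges⟩
    calc (If.filter (fun i => ¬ (Gi G Γ i).Reachable x y)).card
        ≤ (p.edges.toFinset.image Γ).card := Finset.card_le_card hsub
      _ ≤ p.edges.toFinset.card := Finset.card_image_le
      _ ≤ p.edges.length := p.edges.toFinset_card_le
      _ = p.length := p.length_edges
      _ = G.dist x y := hp
  have hN : If.card * (2 * (k * (n - k))) ≤ ∑ x : Fin n, ∑ y : Fin n, G.dist x y :=
    le_trans (hA.trans (le_of_eq hB))
      (Finset.sum_le_sum fun x _ => Finset.sum_le_sum fun y _ => hC x y)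
  have hn1 : 1 ≤ n := by omega
  calc (((Γ '' G.edgeSet).ncard * (2 * (k * (n - k))) : ℕ) : ℝ)
      = ((If.card * (2 * (k * (n - k))) : ℕ) : ℝ) := by rw [hncard]
    _ ≤ ((∑ x : Fin n, ∑ y : Fin n, G.dist x y : ℕ) : ℝ) := by exact_mod_cast hN
    _ = ∑ x : Fin n, ((∑ y : Fin n, G.dist x y : ℕ) : ℝ) := by push_cast; rfl
    _ ≤ ∑ _x : Fin n, (2 * ((n : ℝ) - 1) + k) ^ 2 / (8 * k) :=
        Finset.sum_le_sum fun x _ => distSum hconn hG hk hn1 x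
    _ = (n : ℝ) * ((2 * ((n : ℝ) - 1) + k) ^ 2 / (8 * k)) := by
        rw [Finset.sum_const, Finset.card_univ, Fintype.card_fin, nsmul_eq_mul]

end TestE

section TestG
open SimpleGraph MDAux Finset

lemma connected_of_conn {n k : ℕ} {G : SimpleGraph (Fin n)}
    (hconn : ∀ S : Set (Fin n), S.ncard < k → (G.induce Sᶜ).Connected)
    (hk : 1 ≤ k) (hn : 1 ≤ n) : G.Connected := by
  haveI : Nonempty (Fin n) := ⟨⟨0, hn⟩⟩
  have h := hconn ∅ (by rw [Set.ncard_empty]; omega)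
  refine ⟨fun u v => ?_⟩
  have hu : u ∈ (∅ : Set (Fin n))ᶜ := by simp
  have hv : v ∈ (∅ : Set (Fin n))ᶜ := by simp
  have := (h.preconnected ⟨u, hu⟩ ⟨v, hv⟩).map (inducedHom G _)
  exact this

lemma md_const {V : Type*} (G : SimpleGraph V) : IsMDColoring G (fun _ => 0) := by
  intro u v huv
  refine ⟨0, G.edgeSet, subset_rfl, fun _ _ => rfl, ?_⟩
  have hbot : G.deleteEdges G.edgeSet = ⊥ := by
    ext a b
    simp [SimpleGraph.deleteEdges_adj, SimpleGraph.mem_edgeSet]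
  rw [hbot, SimpleGraph.reachable_bot]
  exact huv

open scoped Classical in
lemma mdNumber_mem {n : ℕ} (G : SimpleGraph (Fin n)) :
    ∃ Γ : Sym2 (Fin n) → ℕ, IsMDColoring G Γ ∧ (Γ '' G.edgeSet).ncard = mdNumber G := by
  classical
  set S : Set ℕ := {m | ∃ Γ : Sym2 (Fin n) → ℕ,
    IsMDColoring G Γ ∧ (Γ '' G.edgeSet).ncard = m} with hS
  have hne : S.Nonempty := ⟨(((fun _ => 0) : Sym2 (Fin n) → ℕ) '' G.edgeSet).ncard,
    (fun _ => 0), md_const G, rfl⟩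
  have hfin : S.Finite := by
    apply Set.Finite.subset (Set.finite_Iic ((Set.univ : Set (Sym2 (Fin n))).ncard))
    rintro m ⟨Γ, -, rfl⟩
    exact Set.mem_Iic.mpr (le_trans (Set.ncard_image_le (Set.toFinite _))
      (Set.ncard_le_ncard (Set.subset_univ _) Set.finite_univ))
  have hmem := Set.Nonempty.csSup_mem hne hfin
  exact hmem

end TestG

section TestF

set_option maxHeartbeats 1000000 in
lemma finalIneq {ε : ℝ} {n k t : ℕ} (h0 : 0 < ε) (h1 : ε < 1 / 2)
    (hlos : ε * n ≤ k) (hup : (k : ℝ) < ε * n + 1) (hk : 1 ≤ k) (hkn : k < n)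
    (ht : ((t * (2 * (k * (n - k))) : ℕ) : ℝ)
      ≤ (n : ℝ) * ((2 * ((n : ℝ) - 1) + k) ^ 2 / (8 * k))) :
    (t : ℝ) ≤ (1 + ε) ^ 2 / (4 * ε ^ 2 * (1 - ε)) := by
  set N : ℝ := (n : ℝ) with hN
  set K : ℝ := (k : ℝ) with hK
  have hK1 : (1 : ℝ) ≤ K := by rw [hK]; exact_mod_cast hk
  have hNK1 : K + 1 ≤ N := by
    rw [hK, hN]
    have : (k + 1 : ℕ) ≤ n := hkn
    exact_mod_cast this
  have hN0 : 0 < N := by linarith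
  have hxN : ε * N < N / 2 := by
    have : ε * N < (1/2) * N := by
      apply mul_lt_mul_of_pos_right h1 hN0
    linarith
  have hx0 : 0 < ε * N := mul_pos h0 hN0
  -- core inequality (i): (εN)²(N - εN) ≤ K²(N-K)
  have hcore1 : (ε * N) ^ 2 * (N - ε * N) ≤ K ^ 2 * (N - K) := by
    -- K = εN + a with 0 ≤ a ≤ 1, N - K ≥ 1, εN ≤ 2(N-K)
    have ha0 : 0 ≤ K - ε * N := by linarith
    have ha1 : K - ε * N ≤ 1 := by linarith
    have hb1 : 1 ≤ N - K := by linarith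
    have hx2b : ε * N ≤ 2 * (N - K) := by nlinarith
    -- K²(N-K) - (εN)²(N-εN) = (K-εN)·((K+εN)(N-K) - (εN)²)
    have hfact : K ^ 2 * (N - K) - (ε * N) ^ 2 * (N - ε * N)
        = (K - ε * N) * ((K + ε * N) * (N - K) - (ε * N) ^ 2) := by ring
    have hpos : 0 ≤ (K + ε * N) * (N - K) - (ε * N) ^ 2 := by nlinarith
    nlinarith [mul_nonneg ha0 hpos]
  -- core inequality (ii)
  have hcore2 : 2 * (N - 1) + K ≤ 2 * (N + ε * N) := by linarith
  have hC0 : 0 ≤ 2 * (N - 1) + K := by linarith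
  -- product inequality
  have hsq : (2 * (N - 1) + K) ^ 2 ≤ (2 * (N + ε * N)) ^ 2 := by nlinarith
  have hprod : ((ε * N) ^ 2 * (N - ε * N)) * (2 * (N - 1) + K) ^ 2
      ≤ (K ^ 2 * (N - K)) * (2 * (N + ε * N)) ^ 2 := by
    apply mul_le_mul hcore1 hsq (sq_nonneg _)
    have h9 : (0:ℝ) ≤ N - K := by linarith
    positivity
  -- scaled main inequality
  have hmain : 4 * ε ^ 2 * (1 - ε) * N * (2 * (N - 1) + K) ^ 2
      ≤ 16 * (1 + ε) ^ 2 * (K ^ 2 * (N - K)) := by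
    have hsc : (4 * ε ^ 2 * (1 - ε) * N * (2 * (N - 1) + K) ^ 2) * N ^ 2
        ≤ (16 * (1 + ε) ^ 2 * (K ^ 2 * (N - K))) * N ^ 2 := by
      calc (4 * ε ^ 2 * (1 - ε) * N * (2 * (N - 1) + K) ^ 2) * N ^ 2
          = 4 * (((ε * N) ^ 2 * (N - ε * N)) * (2 * (N - 1) + K) ^ 2) := by ring
        _ ≤ 4 * ((K ^ 2 * (N - K)) * (2 * (N + ε * N)) ^ 2) :=
            mul_le_mul_of_nonneg_left hprod (by norm_num)
        _ = (16 * (1 + ε) ^ 2 * (K ^ 2 * (N - K))) * N ^ 2 := by ring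
    exact le_of_mul_le_mul_right hsc (by positivity)
  -- denominators
  have hd1 : (0 : ℝ) < 8 * K := by linarith
  have hd2 : (0 : ℝ) < 4 * ε ^ 2 * (1 - ε) := by
    have : (0:ℝ) < 1 - ε := by linarith
    positivity
  have hP : (0 : ℝ) < 2 * (K * (N - K)) := by nlinarith
  -- cast ht
  have htR : (t : ℝ) * (2 * (K * (N - K))) ≤ N * ((2 * (N - 1) + K) ^ 2 / (8 * K)) := by
    have hcast : ((t * (2 * (k * (n - k))) : ℕ) : ℝ) = (t : ℝ) * (2 * (K * (N - K))) := by
      push_cast [Nat.cast_sub (le_of_lt hkn)]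
      ring
    rw [hcast] at ht
    exact ht
  -- middle step
  have hmid : N * ((2 * (N - 1) + K) ^ 2 / (8 * K))
      ≤ ((1 + ε) ^ 2 / (4 * ε ^ 2 * (1 - ε))) * (2 * (K * (N - K))) := by
    rw [mul_div_assoc']
    rw [show ((1 + ε) ^ 2 / (4 * ε ^ 2 * (1 - ε))) * (2 * (K * (N - K)))
        = ((1 + ε) ^ 2 * (2 * (K * (N - K)))) / (4 * ε ^ 2 * (1 - ε)) by ring]
    rw [div_le_div_iff₀ hd1 hd2]
    linear_combination hmain
  have := le_trans htR hmid
  exact le_of_mul_le_mul_right this hP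

end TestF

end MDProofAux

/-- For every `0 < ε < 1/2` there is a constant
`C(ε) ≤ (1+ε)² / (4ε²(1-ε))` bounding the MD-number of every
`⌈εn⌉`-connected graph on `n` vertices; moreover, in a `k`-connected graph
with `k = εn`, every color of an extremal MD-coloring separates at least
`k(n-k)` unordered pairs of vertices. -/
theorem stmt_18 (ε : ℝ) (h0 : 0 < ε) (h1 : ε < 1 / 2) :
    ∃ C : ℝ, C ≤ (1 + ε) ^ 2 / (4 * ε ^ 2 * (1 - ε)) ∧
      (∀ (n : ℕ) (G : SimpleGraph (Fin n)),
        ⌈ε * n⌉₊ < n →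
        (∀ S : Set (Fin n), S.ncard < ⌈ε * n⌉₊ → (G.induce Sᶜ).Connected) →
        (mdNumber G : ℝ) ≤ C) ∧
      (∀ (n k : ℕ) (G : SimpleGraph (Fin n)) (Γ : Sym2 (Fin n) → ℕ),
        (k : ℝ) = ε * n → k < n →
        (∀ S : Set (Fin n), S.ncard < k → (G.induce Sᶜ).Connected) →
        IsMDColoring G Γ → (Γ '' G.edgeSet).ncard = mdNumber G →
        ∀ i ∈ Γ '' G.edgeSet,
          k * (n - k) ≤
            {p : Sym2 (Fin n) | ¬ p.IsDiag ∧
              ∀ u v : Fin n, p = s(u, v) → separatesColor G Γ i u v}.ncard) := by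
  refine ⟨(1 + ε) ^ 2 / (4 * ε ^ 2 * (1 - ε)), le_refl _, ?_, ?_⟩
  · -- bounded md-number
    intro n G hceil hconn
    classical
    have hn1 : 1 ≤ n := by omega
    have hnR : (0 : ℝ) < n := by exact_mod_cast hn1
    have hx0 : (0 : ℝ) < ε * n := mul_pos h0 hnR
    have hk1 : 1 ≤ ⌈ε * n⌉₊ := Nat.ceil_pos.mpr hx0
    have hlos : ε * n ≤ (⌈ε * n⌉₊ : ℝ) := Nat.le_ceil _
    have hup : (⌈ε * n⌉₊ : ℝ) < ε * n + 1 := Nat.ceil_lt_add_one (le_of_lt hx0)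
    have hnk : 2 * ⌈ε * n⌉₊ ≤ n + 1 := by
      have h2 : ((2 * ⌈ε * n⌉₊ : ℕ) : ℝ) < (n : ℝ) + 2 := by push_cast; nlinarith
      have h3 : (2 * ⌈ε * n⌉₊ : ℕ) < n + 2 := by exact_mod_cast h2
      omega
    have hG : G.Connected := connected_of_conn hconn hk1 hn1
    obtain ⟨Γ₀, hMD₀, hcard₀⟩ := mdNumber_mem G
    have htb := totalBound hconn hG hMD₀ hk1 hceil hnk
    rw [hcard₀] at htb
    exact finalIneq h0 h1 hlos hup hk1 hceil htb
  · -- per-color pair count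
    intro n k G Γ hke hkn hconn hMD _hext i hi
    classical
    have hn0 : 0 < n := lt_of_le_of_lt (Nat.zero_le k) hkn
    have hnR : (0 : ℝ) < n := by exact_mod_cast hn0
    have hk1 : 1 ≤ k := by
      rcases Nat.eq_zero_or_pos k with h | h
      · exfalso
        rw [h] at hke
        simp at hke
        rcases hke with h' | h'
        · exact absurd h' h0.ne'
        · omega
      · exact h
    have hnk : 2 * k ≤ n + 1 := by
      have h2 : ((2 * k : ℕ) : ℝ) < (n : ℝ) := by push_cast; nlinarith
      have h3 : (2 * k : ℕ) < n := by exact_mod_cast h2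
      omega
    obtain ⟨e, he, rfl⟩ := hi
    revert he
    induction e using Sym2.ind with
    | _ a b =>
      exact fun he => pairs_card hconn hMD hk1 hkn hnk ((SimpleGraph.mem_edgeSet G).mp he) rfl
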